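/- Let G = (V,E) be a finite graph, ν the fractional fuzzy Potts measure built from a random cluster measure φ_{p,q} with q ≥ 1 and spin parameter α ∈ (0,1). Then for any vertex x ∈ V and any increasing event A ⊆ {±1}^V in the spins, the events A and {σ_x = 1} are positively correlated under ν: ν(A ∩ {σ_x = 1}) ≥ ν(A)·ν(σ_x = 1) = α·ν(A). -/
import Mathlib


open Finset
open scoped Classical
set_option linter.unusedSectionVars false

def openSub {V E : Type*} (ends : E → Sym2 V) (η : E → Bool) : SimpleGraph V :=
  SimpleGraph.fromEdgeSet {s | ∃ f, η f = true ∧ ends f = s}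

noncomputable def numComp {V E : Type*} (ends : E → Sym2 V) (η : E → Bool) : ℕ :=
  Nat.card (openSub ends η).ConnectedComponent

noncomputable def rcWeight {V E : Type*} [Fintype E] (ends : E → Sym2 V)
    (p : E → ℝ) (q : ℝ) (η : E → Bool) : ℝ :=
  (∏ f, if η f then p f else 1 - p f) * q ^ numComp ends η

noncomputable def rcMeasure {V E : Type*} [Fintype V] [Fintype E] [DecidableEq E]
    (ends : E → Sym2 V) (p : E → ℝ) (q : ℝ) (η : E → Bool) : ℝ :=
  rcWeight ends p q η / ∑ τ : E → Bool, rcWeight ends p q τ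

/-- Probability that i.i.d. Bernoulli(α) cluster spins for the open subgraph of `η`
produce the spin configuration `σ` (`true` = spin +1, `false` = spin −1). -/
noncomputable def colorWeight {V E : Type*} (ends : E → Sym2 V) (α : ℝ)
    (η : E → Bool) (σ : V → Bool) : ℝ :=
  if ∀ u v : V, (openSub ends η).Reachable u v → σ u = σ v then
    α ^ Nat.card {K : (openSub ends η).ConnectedComponent //
        ∃ v, (openSub ends η).connectedComponentMk v = K ∧ σ v = true} *
      (1 - α) ^ Nat.card {K : (openSub ends η).ConnectedComponent //
        ∃ v, (openSub ends η).connectedComponentMk v = K ∧ σ v = false}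
  else 0

/-- The fractional fuzzy Potts measure `ν_{φ,α}` built from the random-cluster
measure `φ_{p,q}`. -/
noncomputable def ffpMeasure {V E : Type*} [Fintype V] [Fintype E] [DecidableEq E]
    (ends : E → Sym2 V) (p : E → ℝ) (q α : ℝ) (σ : V → Bool) : ℝ :=
  ∑ η : E → Bool, rcMeasure ends p q η * colorWeight ends α η σ


noncomputable instance fintypeCCaux {V : Type*} [Finite V] (G : SimpleGraph V) :
    Fintype G.ConnectedComponent := Fintype.ofFinite _

section Aux

variable {V E : Type*} [Fintype V] [Fintype E] [DecidableEq V] [DecidableEq E]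
  (ends : E → Sym2 V) (α : ℝ) (η : E → Bool)

/-- lift a component coloring to a vertex coloring -/
def liftSpin (ζ : (openSub ends η).ConnectedComponent → Bool) : V → Bool :=
  fun v => ζ ((openSub ends η).connectedComponentMk v)

lemma liftSpin_inj : Function.Injective (liftSpin ends η) := by
  intro ζ₁ ζ₂ h
  funext K
  obtain ⟨v, rfl⟩ := K.exists_rep
  exact congrFun h v

lemma colorWeight_liftSpin (ζ : (openSub ends η).ConnectedComponent → Bool) :
    colorWeight ends α η (liftSpin ends η ζ) =
      ∏ K, (if ζ K then α else 1 - α) := by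
  have hcond : ∀ u v : V, (openSub ends η).Reachable u v →
      liftSpin ends η ζ u = liftSpin ends η ζ v := fun u v h =>
    congrArg ζ (SimpleGraph.ConnectedComponent.sound h)
  have hcard : ∀ b : Bool, Nat.card {K : (openSub ends η).ConnectedComponent //
      ∃ v, (openSub ends η).connectedComponentMk v = K ∧ liftSpin ends η ζ v = b}
      = (univ.filter (fun K => ζ K = b)).card := by
    intro b
    rw [Nat.card_congr (Equiv.subtypeEquivRight (q := fun K => ζ K = b) ?_)]
    · rw [Nat.card_eq_fintype_card, Fintype.card_subtype]
    · intro K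
      constructor
      · rintro ⟨v, rfl, h⟩; exact h
      · intro h
        obtain ⟨v, rfl⟩ := K.exists_rep
        exact ⟨v, rfl, h⟩
  have hf : (univ.filter fun K => ¬ ζ K = true) = univ.filter fun K => ζ K = false := by
    apply Finset.filter_congr; intros; simp
  rw [colorWeight, if_pos hcond, hcard true, hcard false, Finset.prod_ite,
    Finset.prod_const, Finset.prod_const, hf]

lemma colorWeight_eq_zero_of_not_range (σ : V → Bool)
    (h : σ ∉ Set.range (liftSpin ends η)) : colorWeight ends α η σ = 0 := by
  rw [colorWeight, if_neg]
  intro hcond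
  apply h
  refine ⟨fun K => σ K.out, ?_⟩
  funext v
  have : (openSub ends η).connectedComponentMk
      ((openSub ends η).connectedComponentMk v).out
      = (openSub ends η).connectedComponentMk v := Quot.out_eq _
  exact hcond _ _ (SimpleGraph.ConnectedComponent.exact this)

lemma sum_colorWeight_filter (P : (V → Bool) → Prop) [DecidablePred P] :
    ∑ σ ∈ univ.filter P, colorWeight ends α η σ =
      ∑ ζ ∈ univ.filter (fun ζ => P (liftSpin ends η ζ)),
        colorWeight ends α η (liftSpin ends η ζ) := by
  rw [← Finset.sum_image (f := colorWeight ends α η)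
    (g := liftSpin ends η)
    (fun ζ₁ _ ζ₂ _ h => liftSpin_inj ends η h),
    ← Finset.filter_image (f := liftSpin ends η) (p := P) (s := univ)]
  symm
  apply Finset.sum_subset
  · exact Finset.filter_subset_filter _ (Finset.subset_univ _)
  · intro σ hσ hσ'
    apply colorWeight_eq_zero_of_not_range
    intro hr
    apply hσ'
    rw [Finset.mem_filter] at hσ ⊢
    refine ⟨?_, hσ.2⟩
    obtain ⟨ζ, rfl⟩ := hr
    exact Finset.mem_image_of_mem _ (Finset.mem_univ ζ)

end Aux

section Wlem

variable {ι : Type*} [Fintype ι] {α : ℝ}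

private lemma W_nonneg (h0 : 0 ≤ α) (h1 : α ≤ 1) (ζ : ι → Bool) :
    0 ≤ ∏ K, (if ζ K then α else 1 - α) :=
  Finset.prod_nonneg fun K _ => by by_cases h : ζ K <;> simp [h] <;> linarith

private lemma W_update_true (ζ : ι → Bool) (K₀ : ι) (hζ : ¬ ζ K₀ = true) :
    α * ∏ K, (if ζ K then α else 1 - α)
      = (1 - α) * ∏ K, (if Function.update ζ K₀ true K then α else 1 - α) := by
  classical
  rw [← Finset.mul_prod_erase univ (fun K => if ζ K then α else 1 - α) (mem_univ K₀),
    ← Finset.mul_prod_erase univ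
      (fun K => if Function.update ζ K₀ true K then α else 1 - α) (mem_univ K₀)]
  have herase : ∏ K ∈ univ.erase K₀, (if Function.update ζ K₀ true K then α else 1 - α)
      = ∏ K ∈ univ.erase K₀, (if ζ K then α else 1 - α) :=
    Finset.prod_congr rfl fun K hK => by
      rw [Function.update_of_ne (Finset.ne_of_mem_erase hK)]
  rw [herase, Function.update_self, if_pos rfl, if_neg hζ]
  ring

private lemma sum_W_eq_one (hα : 0 < α ∧ α < 1) :
    ∑ ζ : ι → Bool, ∏ K, (if ζ K then α else 1 - α) = 1 := by
  classical
  rw [← Fintype.prod_sum (fun (_ : ι) (b : Bool) => if b then α else 1 - α)]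
  simp

private lemma update_update (ζ : ι → Bool) (K₀ : ι) (b : Bool) :
    Function.update (Function.update ζ K₀ b) K₀ (ζ K₀) = ζ := by
  classical
  rw [Function.update_idem, Function.update_eq_self]

private lemma sum_W_true (hα : 0 < α ∧ α < 1) (K₀ : ι)
    {dec : DecidablePred (fun ζ : ι → Bool => ζ K₀ = true)} :
    ∑ ζ ∈ @Finset.filter _ _ dec univ,
      ∏ K, (if ζ K then α else 1 - α) = α := by
  classical
  rw [Subsingleton.elim dec inferInstance]
  have h1 := Finset.sum_filter_add_sum_filter_not Finset.univ
    (fun ζ : ι → Bool => ζ K₀ = true) (fun ζ => ∏ K, (if ζ K then α else 1 - α))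
  rw [sum_W_eq_one hα] at h1
  have hpair : α * ∑ ζ ∈ univ.filter (fun ζ : ι → Bool => ¬ ζ K₀ = true),
      ∏ K, (if ζ K then α else 1 - α)
      = (1 - α) * ∑ ζ ∈ univ.filter (fun ζ : ι → Bool => ζ K₀ = true),
      ∏ K, (if ζ K then α else 1 - α) := by
    rw [Finset.mul_sum, Finset.mul_sum]
    refine Finset.sum_bij' (fun ζ _ => Function.update ζ K₀ true)
      (fun ζ _ => Function.update ζ K₀ false) ?_ ?_ ?_ ?_ ?_
    · intro ζ hζ
      simp [Function.update_self]
    · intro ζ hζ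
      simp [Function.update_self]
    · intro ζ hζ
      rw [Finset.mem_filter] at hζ
      have e : ζ K₀ = false := by simpa using hζ.2
      have h2 := update_update ζ K₀ true
      rw [e] at h2
      exact h2
    · intro ζ hζ
      rw [Finset.mem_filter] at hζ
      have h2 := update_update ζ K₀ false
      rw [hζ.2] at h2
      exact h2
    · intro ζ hζ
      rw [Finset.mem_filter] at hζ
      exact W_update_true ζ K₀ hζ.2
  linear_combination α * h1 - hpair

private lemma sum_W_ineq (hα : 0 < α ∧ α < 1) (K₀ : ι) (Q : (ι → Bool) → Prop)
    (hQ : ∀ ζ, Q ζ → ¬ ζ K₀ = true → Q (Function.update ζ K₀ true))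
    {dec1 : DecidablePred (fun ζ : ι → Bool => Q ζ ∧ ζ K₀ = true)}
    {dec2 : DecidablePred Q} :
    ∑ ζ ∈ @Finset.filter _ _ dec1 univ,
      ∏ K, (if ζ K then α else 1 - α)
    ≥ α * ∑ ζ ∈ @Finset.filter _ _ dec2 univ, ∏ K, (if ζ K then α else 1 - α) := by
  classical
  rw [Subsingleton.elim dec1 inferInstance, Subsingleton.elim dec2 inferInstance]
  have hsplit : ∑ ζ ∈ univ.filter Q, ∏ K, (if ζ K then α else 1 - α)
      = (∑ ζ ∈ univ.filter (fun ζ : ι → Bool => Q ζ ∧ ζ K₀ = true),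
          ∏ K, (if ζ K then α else 1 - α))
        + ∑ ζ ∈ univ.filter (fun ζ : ι → Bool => Q ζ ∧ ¬ ζ K₀ = true),
          ∏ K, (if ζ K then α else 1 - α) := by
    rw [← Finset.sum_filter_add_sum_filter_not (Finset.univ.filter Q)
      (fun ζ : ι → Bool => ζ K₀ = true) (fun ζ => ∏ K, (if ζ K then α else 1 - α))]
    congr 1 <;> (rw [Finset.filter_filter]; try congr!)
  have hinj : ∀ ζ₁ ∈ univ.filter (fun ζ : ι → Bool => Q ζ ∧ ¬ ζ K₀ = true),
      ∀ ζ₂ ∈ univ.filter (fun ζ : ι → Bool => Q ζ ∧ ¬ ζ K₀ = true),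
      Function.update ζ₁ K₀ true = Function.update ζ₂ K₀ true → ζ₁ = ζ₂ := by
    intro ζ₁ h₁ ζ₂ h₂ h
    rw [Finset.mem_filter] at h₁ h₂
    have e₁ : ζ₁ K₀ = false := by simpa using h₁.2.2
    have e₂ : ζ₂ K₀ = false := by simpa using h₂.2.2
    funext K
    rcases eq_or_ne K K₀ with rfl | hK
    · rw [e₁, e₂]
    · have := congrFun h K
      rwa [Function.update_of_ne hK, Function.update_of_ne hK] at this
  have key : α * ∑ ζ ∈ univ.filter (fun ζ : ι → Bool => Q ζ ∧ ¬ ζ K₀ = true),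
      ∏ K, (if ζ K then α else 1 - α)
      ≤ (1 - α) * ∑ ζ ∈ univ.filter (fun ζ : ι → Bool => Q ζ ∧ ζ K₀ = true),
      ∏ K, (if ζ K then α else 1 - α) := by
    rw [Finset.mul_sum, Finset.mul_sum]
    calc ∑ ζ ∈ univ.filter (fun ζ : ι → Bool => Q ζ ∧ ¬ ζ K₀ = true),
        α * ∏ K, (if ζ K then α else 1 - α)
        = ∑ ζ ∈ univ.filter (fun ζ : ι → Bool => Q ζ ∧ ¬ ζ K₀ = true),
          (1 - α) * ∏ K, (if Function.update ζ K₀ true K then α else 1 - α) := by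
          refine Finset.sum_congr rfl fun ζ hζ => ?_
          rw [Finset.mem_filter] at hζ
          exact W_update_true ζ K₀ hζ.2.2
      _ = ∑ σ ∈ (univ.filter (fun ζ : ι → Bool => Q ζ ∧ ¬ ζ K₀ = true)).image
            (fun ζ => Function.update ζ K₀ true),
          (1 - α) * ∏ K, (if σ K then α else 1 - α) :=
          (Finset.sum_image
            (f := fun σ : ι → Bool => (1 - α) * ∏ K, (if σ K then α else 1 - α))
            (g := fun ζ : ι → Bool => Function.update ζ K₀ true)
            hinj).symm
      _ ≤ ∑ ζ ∈ univ.filter (fun ζ : ι → Bool => Q ζ ∧ ζ K₀ = true),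
          (1 - α) * ∏ K, (if ζ K then α else 1 - α) := by
          apply Finset.sum_le_sum_of_subset_of_nonneg
          · intro σ hσ
            rw [Finset.mem_image] at hσ
            obtain ⟨ζ, hζ, rfl⟩ := hσ
            rw [Finset.mem_filter] at hζ ⊢
            exact ⟨Finset.mem_univ _, hQ ζ hζ.2.1 hζ.2.2, Function.update_self _ _ _⟩
          · intro σ _ _
            exact mul_nonneg (by linarith [hα.2]) (W_nonneg hα.1.le hα.2.le σ)
  rw [ge_iff_le, hsplit, mul_add]
  linarith [key]

end Wlem

section Main

variable {V E : Type*} [Fintype V] [Fintype E] [DecidableEq V] [DecidableEq E]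

private lemma liftSpin_le_update (ends : E → Sym2 V) (η : E → Bool)
    (ζ : (openSub ends η).ConnectedComponent → Bool)
    (K₀ : (openSub ends η).ConnectedComponent) :
    liftSpin ends η ζ ≤ liftSpin ends η (Function.update ζ K₀ true) := by
  intro v
  dsimp [liftSpin]
  rcases eq_or_ne ((openSub ends η).connectedComponentMk v) K₀ with h | h
  · rw [h, Function.update_self]; exact Bool.le_true _
  · rw [Function.update_of_ne h]

private lemma keyA (ends : E → Sym2 V) (α : ℝ) (η : E → Bool)
    (hα : 0 < α ∧ α < 1) (x : V) :
    ∑ σ ∈ univ.filter (fun σ : V → Bool => σ x = true), colorWeight ends α η σ = α := by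
  rw [sum_colorWeight_filter]
  rw [Finset.sum_congr rfl (fun ζ _ => colorWeight_liftSpin ends α η ζ)]
  exact sum_W_true hα ((openSub ends η).connectedComponentMk x)

private lemma keyB (ends : E → Sym2 V) (α : ℝ) (η : E → Bool)
    (hα : 0 < α ∧ α < 1) (x : V) (A : Set (V → Bool))
    (hA : ∀ σ τ : V → Bool, σ ≤ τ → σ ∈ A → τ ∈ A) :
    ∑ σ ∈ univ.filter (fun σ : V → Bool => σ ∈ A ∧ σ x = true), colorWeight ends α η σ
      ≥ α * ∑ σ ∈ univ.filter (fun σ : V → Bool => σ ∈ A), colorWeight ends α η σ := by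
  rw [sum_colorWeight_filter, sum_colorWeight_filter]
  rw [Finset.sum_congr rfl (fun ζ _ => colorWeight_liftSpin ends α η ζ),
    Finset.sum_congr rfl (fun ζ _ => colorWeight_liftSpin ends α η ζ)]
  exact sum_W_ineq hα ((openSub ends η).connectedComponentMk x)
    (fun ζ => liftSpin ends η ζ ∈ A)
    (fun ζ hζ _ => hA _ _ (liftSpin_le_update ends η ζ _) hζ)

private lemma rcWeight_pos (ends : E → Sym2 V) {p : E → ℝ} {q : ℝ}
    (hp : ∀ f, 0 < p f ∧ p f < 1) (hq : 1 ≤ q) (η : E → Bool) :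
    0 < rcWeight ends p q η := by
  apply mul_pos
  · apply Finset.prod_pos
    intro f _
    by_cases h : η f
    · rw [if_pos h]; exact (hp f).1
    · rw [if_neg h]; linarith [(hp f).2]
  · exact pow_pos (lt_of_lt_of_le one_pos hq) _

private lemma sum_rcMeasure_eq_one (ends : E → Sym2 V) {p : E → ℝ} {q : ℝ}
    (hp : ∀ f, 0 < p f ∧ p f < 1) (hq : 1 ≤ q) :
    ∑ η : E → Bool, rcMeasure ends p q η = 1 := by
  have hS : 0 < ∑ τ : E → Bool, rcWeight ends p q τ :=
    Finset.sum_pos (fun η _ => rcWeight_pos ends hp hq η) Finset.univ_nonempty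
  simp only [rcMeasure]
  rw [← Finset.sum_div, div_self hS.ne']

private lemma rcMeasure_nonneg (ends : E → Sym2 V) {p : E → ℝ} {q : ℝ}
    (hp : ∀ f, 0 < p f ∧ p f < 1) (hq : 1 ≤ q) (η : E → Bool) :
    0 ≤ rcMeasure ends p q η := by
  have hS : 0 < ∑ τ : E → Bool, rcWeight ends p q τ :=
    Finset.sum_pos (fun η _ => rcWeight_pos ends hp hq η) Finset.univ_nonempty
  exact div_nonneg (rcWeight_pos ends hp hq η).le hS.le

end Main

/-- Under the fractional fuzzy Potts measure, any increasing event `A` is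
positively correlated with `{σ_x = 1}`, and `ν(σ_x = 1) = α`. -/
theorem stmt_9 {V E : Type*} [Fintype V] [Fintype E] [DecidableEq V] [DecidableEq E]
    (ends : E → Sym2 V) (p : E → ℝ) (q α : ℝ)
    (hp : ∀ f, 0 < p f ∧ p f < 1) (hq : 1 ≤ q) (hα : 0 < α ∧ α < 1)
    (x : V) (A : Set (V → Bool))
    (hA : ∀ σ τ : V → Bool, σ ≤ τ → σ ∈ A → τ ∈ A) :
    (∑ σ ∈ Finset.univ.filter (fun σ : V → Bool => σ x = true), ffpMeasure ends p q α σ) = α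
    ∧ (∑ σ ∈ Finset.univ.filter (fun σ : V → Bool => σ ∈ A ∧ σ x = true),
        ffpMeasure ends p q α σ) ≥
      α * ∑ σ ∈ Finset.univ.filter (fun σ : V → Bool => σ ∈ A), ffpMeasure ends p q α σ := by
  constructor
  · simp only [ffpMeasure]
    rw [Finset.sum_comm]
    have h : ∀ η ∈ (univ : Finset (E → Bool)),
        ∑ σ ∈ univ.filter (fun σ : V → Bool => σ x = true),
          rcMeasure ends p q η * colorWeight ends α η σ
        = rcMeasure ends p q η * α := fun η _ => by
      rw [← Finset.mul_sum, keyA ends α η hα x]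
    rw [Finset.sum_congr rfl h, ← Finset.sum_mul, sum_rcMeasure_eq_one ends hp hq, one_mul]
  · simp only [ffpMeasure]
    rw [Finset.sum_comm,
      show (∑ σ ∈ Finset.univ.filter (fun σ : V → Bool => σ ∈ A),
          ∑ η : E → Bool, rcMeasure ends p q η * colorWeight ends α η σ)
        = ∑ η : E → Bool, ∑ σ ∈ Finset.univ.filter (fun σ : V → Bool => σ ∈ A),
          rcMeasure ends p q η * colorWeight ends α η σ from Finset.sum_comm]
    rw [ge_iff_le, Finset.mul_sum]
    apply Finset.sum_le_sum
    intro η _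
    rw [← Finset.mul_sum, ← Finset.mul_sum]
    calc α * (rcMeasure ends p q η *
          ∑ σ ∈ univ.filter (fun σ : V → Bool => σ ∈ A), colorWeight ends α η σ)
        = rcMeasure ends p q η *
          (α * ∑ σ ∈ univ.filter (fun σ : V → Bool => σ ∈ A), colorWeight ends α η σ) := by
          ring
      _ ≤ rcMeasure ends p q η *
          ∑ σ ∈ univ.filter (fun σ : V → Bool => σ ∈ A ∧ σ x = true),
            colorWeight ends α η σ :=
          mul_le_mul_of_nonneg_left (keyB ends α η hα x A hA)
            (rcMeasure_nonneg ends hp hq η)
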